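/- For the Apogee-to-Apogee Path Sampler, the map G(θ, ρ, c, i) = (S ∘ Φ_h^i(θ, ρ), c + S_#((θ,ρ), S ∘ Φ_h^i(θ,ρ)), i) is an involution on ℝ^{2d} × ℤ² provided the segment-index function satisfies S_#((θ,ρ), (θ',ρ')) = −S_#((θ',ρ'), (θ,ρ)) whenever (θ',ρ') is accessible from (θ,ρ), and S ∘ Φ_h^i is an involution in the phase-space component in the sense that S ∘ Φ_h^i(S ∘ Φ_h^i(θ,ρ)) = (θ,ρ). -/
import Mathlib


open MeasureTheory ENNReal

noncomputable section

/-- Phase space `ℝ^d × ℝ^d` (positions and momenta). -/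
abbrev Phase (d : ℕ) : Type := (Fin d → ℝ) × (Fin d → ℝ)

/-- The momentum flip map `S(θ, ρ) = (θ, -ρ)`. -/
def Smap (d : ℕ) : Phase d → Phase d := fun z => (z.1, -z.2)

/-- For AAPS, the map
`G(θ, ρ, c, i) = (S ∘ Φ_h^i(θ,ρ), c + S_#((θ,ρ), S ∘ Φ_h^i(θ,ρ)), i)` is an
involution, given the antisymmetry of the segment index function `S_#` on accessible
pairs and that `S ∘ Φ_h^i` is an involution in the phase-space component. -/
theorem stmt_18 {d : ℕ} (Φ : Equiv.Perm (Phase d))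
    (hΦS : ∀ z, Smap d (Φ (Smap d z)) = Φ⁻¹ z)
    (sharp : Phase d → Phase d → ℤ)
    (hanti : ∀ (z : Phase d) (i : ℤ),
      sharp z (Smap d ((Φ ^ i) z)) = - sharp (Smap d ((Φ ^ i) z)) z)
    (hSinv : ∀ (z : Phase d) (i : ℤ), Smap d ((Φ ^ i) (Smap d ((Φ ^ i) z))) = z)
    (G : Phase d × ℤ × ℤ → Phase d × ℤ × ℤ)
    (hG : ∀ (z : Phase d) (c i : ℤ),
      G (z, c, i) = (Smap d ((Φ ^ i) z), c + sharp z (Smap d ((Φ ^ i) z)), i)) :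
    ∀ q, G (G q) = q := by
  rintro ⟨z, c, i⟩
  rw [hG, hG, hSinv, hanti]
  simp
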